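/- The formula (¬x ∨ a ∨ b) ∧ (¬x ∨ ¬a ∨ b) ∧ (¬x ∨ ¬b ∨ c) ∧ (¬x ∨ ¬b ∨ ¬c), with fresh variables a, b, c, is satisfiable when extended from a given assignment of x if and only if x = False — i.e., it is logically equivalent (after existentially quantifying a, b, c) to ¬x. Hence replacing an all-negative repeated clause (¬x ∨ ¬x ∨ ¬x) by this conjunction preserves satisfiability of the enclosing CNF formula. -/
import Mathlib

/-- The formula `(¬x ∨ a ∨ b) ∧ (¬x ∨ ¬a ∨ b) ∧ (¬x ∨ ¬b ∨ c) ∧ (¬x ∨ ¬b ∨ ¬c)`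
with fresh variables `a, b, c` is satisfiable extending a given value of `x` iff
`x = false`; hence replacing the clause `(¬x ∨ ¬x ∨ ¬x)` by this conjunction
preserves satisfiability of the enclosing CNF formula (whose remaining part is
represented by an arbitrary predicate `R` on the value of `x`, since `a, b, c`
occur nowhere else). -/
theorem all_negative_clause_replacement :
    (∀ x : Bool,
      (∃ a b c : Bool,
          ((!x || a || b) && (!x || !a || b) && (!x || !b || c) &&
            (!x || !b || !c)) = true) ↔ x = false) ∧
    (∀ R : Bool → Prop,
      ((∃ x : Bool, R x ∧ (!x || !x || !x) = true) ↔
        (∃ (x a b c : Bool), R x ∧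
          ((!x || a || b) && (!x || !a || b) && (!x || !b || c) &&
            (!x || !b || !c)) = true))) := by
  constructor
  · intro x
    constructor
    · rintro ⟨a, b, c, h⟩
      revert h; cases x <;> cases a <;> cases b <;> cases c <;> simp
    · rintro rfl; exact ⟨false, false, false, rfl⟩
  · intro R
    constructor
    · rintro ⟨x, hR, hx⟩
      cases x
      · exact ⟨false, false, false, false, hR, rfl⟩
      · simp at hx
    · rintro ⟨x, a, b, c, hR, h⟩
      refine ⟨x, hR, ?_⟩
      revert h; cases x <;> cases a <;> cases b <;> cases c <;> simp
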